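/- Let κ be an uncountable regular cardinal with κ^{<κ}=κ. Every Lusin set for κ in 2^κ has the κ-Menger property U_{<κ}^κ(O_κ, O_κ). -/

import Mathlib

noncomputable section

open Cardinal Set

namespace GenSp

/-- The index set: a canonical type of order type `κ.ord`. -/
abbrev I (κ : Cardinal.{0}) : Type := κ.ord.ToType

variable (κ : Cardinal.{0}) (A : Type)

/-- The generalized space `A^κ`. -/
abbrev Sp : Type := I κ → A

/-- The basic clopen set `[x ↾ ξ]`: all functions agreeing with `x` below `ξ`. -/
def cyl (x : Sp κ A) (ξ : I κ) : Set (Sp κ A) := {y | ∀ β < ξ, y β = x β}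

/-- The bounded topology on `A^κ`, generated by the basic clopen sets. -/
def bt : TopologicalSpace (Sp κ A) :=
  .generateFrom {S | ∃ x ξ, S = cyl κ A x ξ}

/-- Open in the bounded topology. -/
def OpenK (s : Set (Sp κ A)) : Prop := @IsOpen _ (bt κ A) s

/-- Closed in the bounded topology. -/
def ClosedK (s : Set (Sp κ A)) : Prop := @IsClosed _ (bt κ A) s

/-- Nowhere dense in the bounded topology. -/
def NwdK (s : Set (Sp κ A)) : Prop := @IsNowhereDense _ (bt κ A) s

/-- κ-meagre: a union of (at most) κ nowhere dense sets. -/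
def MeagreK (s : Set (Sp κ A)) : Prop :=
  ∃ f : I κ → Set (Sp κ A), (∀ i, NwdK κ A (f i)) ∧ s = ⋃ i, f i

/-- κ-strongly null set. -/
def SNullK (S : Set (Sp κ A)) : Prop :=
  ∀ ξ : I κ → I κ, ∃ a : I κ → Sp κ A, S ⊆ ⋃ α, cyl κ A (a α) (ξ α)

/-- Coordinatewise addition over `ℤ₂` (translation by `x`). -/
def xadd (x y : Sp κ Bool) : Sp κ Bool := fun i => xor (x i) (y i)

/-- The covering number of the κ-meagre ideal. -/
def covM : Cardinal :=
  sInf {c | ∃ 𝒜 : Set (Set (Sp κ A)), #𝒜 = c ∧ (∀ s ∈ 𝒜, MeagreK κ A s) ∧ ⋃₀ 𝒜 = Set.univ}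

/-- The cofinality of the κ-meagre ideal. -/
def cofM : Cardinal :=
  sInf {c | ∃ 𝒜 : Set (Set (Sp κ A)), #𝒜 = c ∧ (∀ s ∈ 𝒜, MeagreK κ A s) ∧
    ∀ t, MeagreK κ A t → ∃ s ∈ 𝒜, t ⊆ s}

/-- κ is weakly compact: uncountable and with the partition property κ → (κ)²₂. -/
def IsWeaklyCompact (κ : Cardinal.{0}) : Prop :=
  ℵ₀ < κ ∧ ∀ c : I κ → I κ → Bool, ∃ H : Set (I κ), #H = κ ∧
    ∃ b : Bool, ∀ i ∈ H, ∀ j ∈ H, i < j → c i j = b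

/-- `S` is κ-meagre relative to `P` (in the subspace topology). -/
def MeagreInK (P S : Set (Sp κ A)) : Prop :=
  ∃ f : I κ → Set P,
    (∀ i, @IsNowhereDense _ (TopologicalSpace.induced Subtype.val (bt κ A)) (f i)) ∧
    {x : P | (x : Sp κ A) ∈ S} = ⋃ i, f i

/-- Perfect set in the bounded topology. -/
def PerfK (P : Set (Sp κ A)) : Prop := @Perfect _ (bt κ A) P

/-- Perfectly κ-meagre set. -/
def PMeagreK (S : Set (Sp κ A)) : Prop := ∀ P, PerfK κ A P → MeagreInK κ A P S

/-- κ-λ-set. -/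
def KLambdaSet (S : Set (Sp κ A)) : Prop :=
  ∀ B ⊆ S, #B ≤ κ → ∃ G : I κ → Set (Sp κ A),
    (∀ i, OpenK κ A (G i)) ∧ (⋂ i, G i) ∩ S = B

/-- κ-σ-set. -/
def KSigmaSet (S : Set (Sp κ A)) : Prop :=
  ∀ F : I κ → Set (Sp κ A), (∀ i, ClosedK κ A (F i)) →
    ∃ G : I κ → Set (Sp κ A), (∀ i, OpenK κ A (G i)) ∧
      S ∩ (⋃ i, F i) = S ∩ (⋂ i, G i)

/-- κ-γ-set: every open (proper) κ-cover contains a κ-γ-subcover of size κ. -/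
def KGammaSet (X : Set (Sp κ A)) : Prop :=
  ∀ 𝒰 : Set (Set (Sp κ A)), (∀ U ∈ 𝒰, OpenK κ A U) → X ∉ 𝒰 →
    (∀ C ⊆ X, #C < κ → ∃ U ∈ 𝒰, C ⊆ U) →
    ∃ U : I κ → Set (Sp κ A), (∀ α, U α ∈ 𝒰) ∧
      X ⊆ ⋃ α, ⋂ β, ⋂ (_ : α < β), U β

/-- A (proper) open cover of `X` of size κ, indexed by `I κ`. -/
def IsOCovSeq (X : Set (Sp κ A)) (U : I κ → Set (Sp κ A)) : Prop :=
  (∀ α, OpenK κ A (U α)) ∧ (∀ α, U α ≠ X) ∧ X ⊆ ⋃ α, U α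

/-- A (proper) κ-γ-cover of `X`, indexed by `I κ`. -/
def IsGammaCovSeq (X : Set (Sp κ A)) (U : I κ → Set (Sp κ A)) : Prop :=
  (∀ α, OpenK κ A (U α)) ∧ (∀ α, U α ≠ X) ∧
    X ⊆ ⋃ α, ⋂ β, ⋂ (_ : α < β), U β

/-- The cover `U` is essentially of size κ: no subfamily of size `< κ` covers `X`. -/
def EssK (X : Set (Sp κ A)) (U : I κ → Set (Sp κ A)) : Prop :=
  ∀ s : Set (I κ), #s < κ → ¬ X ⊆ ⋃ β ∈ s, U β

/-- The selection principle `S₁^κ(Γ_κ, Γ_κ)`. -/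
def S1GammaGamma (X : Set (Sp κ A)) : Prop :=
  ∀ 𝒰 : I κ → I κ → Set (Sp κ A), (∀ α, IsGammaCovSeq κ A X (𝒰 α)) →
    ∃ f : I κ → I κ, IsGammaCovSeq κ A X (fun α => 𝒰 α (f α))

/-- The κ-Hurewicz property `U^κ_{<κ}(O_κ, Γ_κ)`. -/
def KHurewicz (X : Set (Sp κ A)) : Prop :=
  ∀ 𝒰 : I κ → I κ → Set (Sp κ A), (∀ α, IsOCovSeq κ A X (𝒰 α)) →
    (∀ α, EssK κ A X (𝒰 α)) →
    ∃ V : I κ → Set (I κ), (∀ α, #(V α) < κ) ∧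
      IsGammaCovSeq κ A X (fun α => ⋃ β ∈ V α, 𝒰 α β)

/-- The κ-Menger property `U^κ_{<κ}(O_κ, O_κ)`. -/
def KMenger (X : Set (Sp κ A)) : Prop :=
  ∀ 𝒰 : I κ → I κ → Set (Sp κ A), (∀ α, IsOCovSeq κ A X (𝒰 α)) →
    (∀ α, EssK κ A X (𝒰 α)) →
    ∃ V : I κ → Set (I κ), (∀ α, #(V α) < κ) ∧
      IsOCovSeq κ A X (fun α => ⋃ β ∈ V α, 𝒰 α β)

/-- The κ-Rothberger property `S₁^κ(O_κ, O_κ)`. -/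
def KRothberger (X : Set (Sp κ A)) : Prop :=
  ∀ 𝒰 : I κ → I κ → Set (Sp κ A), (∀ α, IsOCovSeq κ A X (𝒰 α)) →
    ∃ f : I κ → I κ, IsOCovSeq κ A X (fun α => 𝒰 α (f α))

/-- Closed unbounded subset of `I κ`. -/
def IsClubK (S : Set (I κ)) : Prop :=
  (∀ a : I κ, ∃ b ∈ S, a < b) ∧
  (∀ a : I κ, (∃ b, b < a) → (∀ b < a, ∃ c ∈ S, b < c ∧ c < a) → a ∈ S)

/-- Stationary subset of `I κ`. -/
def IsStatK (S : Set (I κ)) : Prop :=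
  ∀ C : Set (I κ), IsClubK κ C → (S ∩ C).Nonempty

/-- The diamond principle `◇_κ(E)`. -/
def DiamondK (E : Set (I κ)) : Prop :=
  ∃ s : I κ → Set (I κ), (∀ α, s α ⊆ Iio α) ∧
    ∀ X : Set (I κ), IsStatK κ {α | α ∈ E ∧ X ∩ Iio α = s α}

/-- The guessing principle `◇_κ(E, 2^κ, NS_κ)`. -/
def DiamondFunK (E : Set (I κ)) : Prop :=
  ∃ s : I κ → Sp κ Bool,
    ∀ x : Sp κ Bool, IsStatK κ {α | α ∈ E ∧ ∀ β < α, x β = s α β}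

/-- `S` is `X`-small. -/
def XSmall (X : Set (I κ)) (S : Set (Sp κ A)) : Prop :=
  ∃ a : I κ → Sp κ A, S ⊆ ⋃ α ∈ X, cyl κ A (a α) α

/-- `S` is small in `A^κ`. -/
def SmallK (S : Set (Sp κ A)) : Prop :=
  ∃ lam : Cardinal, lam < κ ∧ ∀ α : I κ, ∃ T : Set (Sp κ A),
    #T ≤ lam ∧ S ⊆ ⋃ x ∈ T, cyl κ A x α



section Aux

open TopologicalSpace

lemma mk_I (κ : Cardinal.{0}) : #(I κ) = κ := by
  simp [I]

lemma nonempty_I {κ : Cardinal.{0}} (hk : Cardinal.aleph0 < κ) : Nonempty (I κ) := by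
  apply Cardinal.mk_ne_zero_iff.mp
  rw [mk_I]
  exact ne_of_gt (Cardinal.aleph0_pos.trans hk)

lemma mk_Iio_lt {κ : Cardinal.{0}} (ξ : I κ) : #(Set.Iio ξ) < κ := by
  exact Cardinal.mk_Iio_ord_toType ξ

lemma mem_cyl_self (κ : Cardinal.{0}) (A : Type) (x : Sp κ A) (ξ : I κ) : x ∈ cyl κ A x ξ :=
  fun _ _ => rfl

lemma cyl_eq_of_mem {κ : Cardinal.{0}} {A : Type} {x y : Sp κ A} {ξ : I κ}
    (h : y ∈ cyl κ A x ξ) : cyl κ A y ξ = cyl κ A x ξ := by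
  ext z
  constructor <;> intro hz β hβ
  · rw [hz β hβ, h β hβ]
  · rw [hz β hβ, ← h β hβ]

lemma cyl_mono {κ : Cardinal.{0}} {A : Type} {x : Sp κ A} {ξ η : I κ} (h : η ≤ ξ) :
    cyl κ A x ξ ⊆ cyl κ A x η :=
  fun _ hz β hβ => hz β (lt_of_lt_of_le hβ h)

lemma cyl_openK (κ : Cardinal.{0}) (A : Type) (x : Sp κ A) (ξ : I κ) :
    OpenK κ A (cyl κ A x ξ) :=
  @TopologicalSpace.isOpen_generateFrom_of_mem _ _ _ ⟨x, ξ, rfl⟩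

lemma exists_cyl_subset {κ : Cardinal.{0}} {A : Type} (hne : Nonempty (I κ))
    {U : Set (Sp κ A)} (hU : OpenK κ A U) :
    ∀ x ∈ U, ∃ ξ, cyl κ A x ξ ⊆ U := by
  have hU' : TopologicalSpace.GenerateOpen {S | ∃ x ξ, S = cyl κ A x ξ} U := hU
  clear hU
  induction hU' with
  | basic S hS =>
    obtain ⟨z, ξ, rfl⟩ := hS
    intro x hx
    exact ⟨ξ, (cyl_eq_of_mem hx).symm ▸ subset_rfl⟩
  | univ =>
    intro x _
    exact ⟨Classical.arbitrary _, fun _ _ => trivial⟩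
  | inter s t _ _ ihs iht =>
    intro x hx
    obtain ⟨ξ, hξ⟩ := ihs x hx.1
    obtain ⟨η, hη⟩ := iht x hx.2
    exact ⟨max ξ η, fun z hz =>
      ⟨hξ (cyl_mono (le_max_left ξ η) hz), hη (cyl_mono (le_max_right ξ η) hz)⟩⟩
  | sUnion S _ ih =>
    intro x hx
    obtain ⟨s, hsS, hxs⟩ := hx
    obtain ⟨ξ, h⟩ := ih s hsS x hxs
    exact ⟨ξ, h.trans (Set.subset_sUnion_of_mem hsS)⟩

end Aux

theorem stmt15 (κ : Cardinal.{0}) (hk : Cardinal.aleph0 < κ) (hreg : κ.IsRegular) (hpow : κ ^< κ = κ)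
    (L : Set (Sp κ Bool)) (hL1 : κ < #L)
    (hL2 : ∀ X, MeagreK κ Bool X → #↥(L ∩ X) ≤ κ) :
    KMenger κ Bool L := by
  classical
  intro 𝒰 hcov hess
  have hne : Nonempty (I κ) := nonempty_I hk
  have hκale : Cardinal.aleph0 ≤ κ := hk.le
  -- The type of cylinder codes
  let T : Type := (ξ : I κ) × (Set.Iio ξ → Bool)
  -- extension of a code to a full point
  let ext : T → Sp κ Bool := fun t i => if h : i < t.1 then t.2 ⟨i, h⟩ else false
  let C : T → Set (Sp κ Bool) := fun t => cyl κ Bool (ext t) t.1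
  -- #T ≤ κ
  have hTle : #T ≤ κ := by
    have h1 : #T = Cardinal.sum (fun ξ : I κ => #(Set.Iio ξ → Bool)) := Cardinal.mk_sigma _
    have h2 : ∀ ξ : I κ, #(Set.Iio ξ → Bool) ≤ κ := by
      intro ξ
      have e1 : #(Set.Iio ξ → Bool) = (2 : Cardinal) ^ #(Set.Iio ξ) := by
        rw [← Cardinal.mk_bool, Cardinal.power_def]
      have h2κ : (2 : Cardinal) ≤ κ := by
        have : ((2 : ℕ) : Cardinal) < Cardinal.aleph0 := Cardinal.nat_lt_aleph0 2
        have h2' : (2 : Cardinal) < Cardinal.aleph0 := by exact_mod_cast this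
        exact (h2'.trans hk).le
      calc #(Set.Iio ξ → Bool) = (2 : Cardinal) ^ #(Set.Iio ξ) := e1
        _ ≤ κ ^ #(Set.Iio ξ) := Cardinal.power_le_power_right h2κ
        _ ≤ κ ^< κ := Cardinal.le_powerlt κ (mk_Iio_lt ξ)
        _ = κ := hpow
    calc #T = Cardinal.sum (fun ξ : I κ => #(Set.Iio ξ → Bool)) := h1
      _ ≤ Cardinal.sum (fun _ : I κ => κ) := Cardinal.sum_le_sum _ _ h2
      _ = #(I κ) * κ := Cardinal.sum_const' _ _
      _ = κ * κ := by rw [mk_I]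
      _ = κ := Cardinal.mul_eq_self hκale
  -- surjection from I κ onto T
  have hTne : Nonempty T := ⟨⟨Classical.arbitrary _, fun _ => false⟩⟩
  obtain ⟨f⟩ : Nonempty (T ↪ I κ) := (Cardinal.le_def _ _).mp (by rw [mk_I]; exact hTle)
  let e : I κ → T := Function.invFun f
  have he : Function.Surjective e := Function.invFun_surjective f.injective
  -- split I κ into two copies
  have hEq : #((I κ) ⊕ (I κ)) = #(I κ) := by
    rw [Cardinal.mk_sum, Cardinal.lift_id, mk_I, Cardinal.add_eq_self hκale]
  obtain ⟨E⟩ : Nonempty ((I κ) ⊕ (I κ) ≃ I κ) := Cardinal.eq.mp hEq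
  -- first-half picks
  have hpick : ∀ α₀ : I κ, ∃ b : I κ, (L ∩ C (e α₀)).Nonempty →
      ∃ p ∈ L ∩ C (e α₀), p ∈ 𝒰 (E (Sum.inl α₀)) b := by
    intro α₀
    by_cases h : (L ∩ C (e α₀)).Nonempty
    · obtain ⟨p, hp⟩ := h
      have : p ∈ ⋃ b, 𝒰 (E (Sum.inl α₀)) b := (hcov (E (Sum.inl α₀))).2.2 hp.1
      obtain ⟨b, hb⟩ := Set.mem_iUnion.mp this
      exact ⟨b, fun _ => ⟨p, hp, hb⟩⟩
    · exact ⟨Classical.arbitrary _, fun hn => absurd hn h⟩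
  choose β hβ using hpick
  let W : Set (Sp κ Bool) := ⋃ α₀, 𝒰 (E (Sum.inl α₀)) (β α₀)
  -- density of W relative to L
  have hdense : ∀ (x : Sp κ Bool) (ξ : I κ), ∃ z η,
      cyl κ Bool z η ⊆ cyl κ Bool x ξ ∧ cyl κ Bool z η ∩ (L \ W) = ∅ := by
    intro x ξ
    set t : T := ⟨ξ, fun i => x i.1⟩ with ht
    have hCt : C t = cyl κ Bool x ξ := by
      apply cyl_eq_of_mem
      intro γ hγ
      show (if h : γ < ξ then x γ else false) = x γ
      rw [dif_pos hγ]
    obtain ⟨α₀, hα₀⟩ := he t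
    by_cases hcase : (L ∩ C (e α₀)).Nonempty
    · obtain ⟨p, hpL, hpU⟩ := hβ α₀ hcase
      have hpW : p ∈ W := Set.mem_iUnion.mpr ⟨α₀, hpU⟩
      have hUopen : OpenK κ Bool (𝒰 (E (Sum.inl α₀)) (β α₀)) := (hcov _).1 _
      obtain ⟨η, hη⟩ := exists_cyl_subset hne hUopen p hpU
      refine ⟨p, max ξ η, ?_, ?_⟩
      · have hp2 : p ∈ cyl κ Bool x ξ := by rw [← hCt, ← hα₀]; exact hpL.2
        calc cyl κ Bool p (max ξ η) ⊆ cyl κ Bool p ξ := cyl_mono (le_max_left ξ η)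
          _ = cyl κ Bool x ξ := cyl_eq_of_mem hp2
      · apply Set.eq_empty_of_subset_empty
        intro z ⟨hz1, hz2⟩
        exact absurd (hη (cyl_mono (le_max_right ξ η) hz1)) fun hzU =>
          hz2.2 (Set.mem_iUnion.mpr ⟨α₀, hzU⟩)
    · refine ⟨x, ξ, subset_rfl, ?_⟩
      apply Set.eq_empty_of_subset_empty
      intro z ⟨hz1, hz2⟩
      apply hcase
      rw [hα₀, hCt]
      exact ⟨z, hz2.1, hz1⟩
  -- L \ W is nowhere dense
  have hnwd : NwdK κ Bool (L \ W) := by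
    show @interior _ (bt κ Bool) (@closure _ (bt κ Bool) (L \ W)) = ∅
    rw [Set.eq_empty_iff_forall_notMem]
    intro y hy
    obtain ⟨ξ, hξ⟩ := exists_cyl_subset hne (@isOpen_interior _ (bt κ Bool) _) y hy
    have hsub : cyl κ Bool y ξ ⊆ @closure _ (bt κ Bool) (L \ W) :=
      hξ.trans (@interior_subset _ (bt κ Bool) _)
    obtain ⟨z, η, h1, h2⟩ := hdense y ξ
    have hzcl : z ∈ @closure _ (bt κ Bool) (L \ W) := hsub (h1 (mem_cyl_self κ Bool z η))
    have := (@mem_closure_iff _ (bt κ Bool) z (L \ W)).mp hzcl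
      (cyl κ Bool z η) (cyl_openK κ Bool z η) (mem_cyl_self κ Bool z η)
    rw [h2] at this
    exact Set.not_nonempty_empty this
  -- L \ W is κ-meagre, hence small
  have hmeag : MeagreK κ Bool (L \ W) :=
    ⟨fun _ => L \ W, fun _ => hnwd, (Set.iUnion_const _).symm⟩
  have hsmall : #(↥(L \ W)) ≤ κ := by
    have := hL2 _ hmeag
    rwa [Set.inter_eq_self_of_subset_right Set.diff_subset] at this
  -- enumerate L \ W
  have hg : ∃ g : I κ → Sp κ Bool, ∀ x ∈ L \ W, ∃ γ, g γ = x := by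
    by_cases hR : (L \ W).Nonempty
    · have hRne : Nonempty (↥(L \ W)) := hR.to_subtype
      obtain ⟨f'⟩ : Nonempty (↥(L \ W) ↪ I κ) :=
        (Cardinal.le_def _ _).mp (by rw [mk_I]; exact hsmall)
      refine ⟨fun γ => Subtype.val (Function.invFun (⇑f') γ), fun x hx => ?_⟩
      obtain ⟨γ, hγ⟩ := Function.invFun_surjective f'.injective ⟨x, hx⟩
      exact ⟨γ, congrArg Subtype.val hγ⟩
    · exact ⟨fun _ => fun _ => false, fun x hx => absurd ⟨x, hx⟩ hR⟩
  obtain ⟨g, hgsurj⟩ := hg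
  -- second-half picks
  have hpick2 : ∀ γ : I κ, ∃ b : I κ, g γ ∈ L → g γ ∈ 𝒰 (E (Sum.inr γ)) b := by
    intro γ
    by_cases h : g γ ∈ L
    · have : g γ ∈ ⋃ b, 𝒰 (E (Sum.inr γ)) b := (hcov (E (Sum.inr γ))).2.2 h
      obtain ⟨b, hb⟩ := Set.mem_iUnion.mp this
      exact ⟨b, fun _ => hb⟩
    · exact ⟨Classical.arbitrary _, fun hn => absurd hn h⟩
  choose δ hδ using hpick2
  -- the selection
  set V : I κ → Set (I κ) := fun α => Sum.elim (fun α₀ => {β α₀}) (fun γ => {δ γ}) (E.symm α)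
    with hVdef
  have hVsing : ∀ α, ∃ b, V α = {b} := by
    intro α
    rcases h : E.symm α with α₀ | γ
    · exact ⟨β α₀, by simp only [hVdef, h, Sum.elim_inl]⟩
    · exact ⟨δ γ, by simp only [hVdef, h, Sum.elim_inr]⟩
  have hVlt : ∀ α, #(V α) < κ := by
    intro α
    obtain ⟨b, hb⟩ := hVsing α
    rw [hb, Cardinal.mk_singleton]
    exact Cardinal.one_lt_aleph0.trans hk
  have hV1 : ∀ α₀, V (E (Sum.inl α₀)) = {β α₀} := by
    intro α₀; simp only [hVdef, Equiv.symm_apply_apply, Sum.elim_inl]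
  have hV2 : ∀ γ, V (E (Sum.inr γ)) = {δ γ} := by
    intro γ; simp only [hVdef, Equiv.symm_apply_apply, Sum.elim_inr]
  refine ⟨V, hVlt, fun α => @isOpen_biUnion _ _ (bt κ Bool) _ _ (fun b _ => (hcov α).1 b),
    fun α heq => hess α (V α) (hVlt α) (heq ▸ subset_rfl), ?_⟩
  intro x hx
  by_cases hxW : x ∈ W
  · obtain ⟨α₀, hα₀⟩ := Set.mem_iUnion.mp hxW
    exact Set.mem_iUnion.mpr ⟨E (Sum.inl α₀), Set.mem_biUnion (by rw [hV1]; exact rfl) hα₀⟩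
  · obtain ⟨γ, hγ⟩ := hgsurj x ⟨hx, hxW⟩
    have hx2 : x ∈ 𝒰 (E (Sum.inr γ)) (δ γ) := by rw [← hγ]; exact hδ γ (hγ ▸ hx)
    exact Set.mem_iUnion.mpr ⟨E (Sum.inr γ), Set.mem_biUnion (by rw [hV2]; exact rfl) hx2⟩

end GenSp
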